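/- For every real B ≥ 1 and every integer w ≥ 1, Σ_{s=1}^{w} (1/s) · Π_{j=s}^{w} (1 + B/j) ≤ (π²/6) · e^B · w^B. -/

import Mathlib

open Finset Real

lemma harm_bound (s w : ℕ) (hs : 1 ≤ s) (hsw : s ≤ w) :
    ∑ j ∈ Icc s w, 1 / (j : ℝ) ≤ 1 + Real.log w - Real.log s := by
  induction w with
  | zero => omega
  | succ n ih =>
    rcases Nat.lt_or_ge n s with h | h
    · have : s = n + 1 := by omega
      subst this
      simp only [Finset.Icc_self, Finset.sum_singleton]
      have h0 : (1:ℝ) ≤ (n+1:ℕ) := by exact_mod_cast Nat.one_le_iff_ne_zero.mpr (by omega)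
      have h1 : 1 / ((n+1:ℕ):ℝ) ≤ 1 := by
        rw [div_le_one (by linarith)]; linarith
      linarith
    · have := ih h
      rw [Finset.sum_Icc_succ_top (by omega)]
      have hn : (0:ℝ) < n := by exact_mod_cast Nat.lt_of_lt_of_le (by omega) h
      have hn1 : (0:ℝ) < (n:ℝ) + 1 := by linarith
      have key : 1 / ((n:ℝ)+1) ≤ Real.log (n+1) - Real.log n := by
        have h3 := Real.log_le_sub_one_of_pos (x := (n:ℝ)/((n:ℝ)+1)) (by positivity)
        rw [Real.log_div (ne_of_gt hn) (ne_of_gt hn1)] at h3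
        have h2 : (n:ℝ)/((n:ℝ)+1) - 1 = -(1/((n:ℝ)+1)) := by field_simp; ring
        linarith
      push_cast
      linarith

/-- **Product-sum estimate used to unroll the error recursion (proof of Lemma C.7):**
for `B ≥ 1` and `w ≥ 1`, `∑_{s=1}^{w} (1/s) ∏_{j=s}^{w} (1 + B/j) ≤ (π²/6) e^B w^B`. -/
theorem stmt9 (B : ℝ) (hB : 1 ≤ B) (w : ℕ) (hw : 1 ≤ w) :
    ∑ s ∈ Finset.Icc 1 w, (1 / (s : ℝ)) * ∏ j ∈ Finset.Icc s w, (1 + B / (j : ℝ))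
      ≤ Real.pi ^ 2 / 6 * Real.exp B * (w : ℝ) ^ B := by
  have hB0 : 0 < B := by linarith
  have hwpos : (0:ℝ) < w := by exact_mod_cast hw
  -- step 1: termwise bound
  have step : ∀ s ∈ Icc 1 w,
      (1 / (s : ℝ)) * ∏ j ∈ Icc s w, (1 + B / (j : ℝ))
        ≤ Real.exp B * (w:ℝ) ^ B * (1 / (s:ℝ)^2) := by
    intro s hs
    rw [Finset.mem_Icc] at hs
    have hs1 : (1:ℝ) ≤ s := by exact_mod_cast hs.1
    have hspos : (0:ℝ) < s := by linarith
    have hprod : ∏ j ∈ Icc s w, (1 + B / (j : ℝ)) ≤ Real.exp (B * ∑ j ∈ Icc s w, 1 / (j:ℝ)) := by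
      rw [Finset.mul_sum, Real.exp_sum]
      apply Finset.prod_le_prod
      · intro j hj
        rw [Finset.mem_Icc] at hj
        have : (0:ℝ) < j := by exact_mod_cast Nat.lt_of_lt_of_le (by omega) hj.1
        positivity
      · intro j hj
        have h := Real.add_one_le_exp (B * (1 / (j:ℝ)))
        rw [mul_one_div] at h ⊢
        linarith
    have hharm := harm_bound s w hs.1 hs.2
    have hexp : Real.exp (B * ∑ j ∈ Icc s w, 1 / (j:ℝ))
        ≤ Real.exp (B * (1 + Real.log w - Real.log s)) := by
      apply Real.exp_le_exp.mpr
      apply mul_le_mul_of_nonneg_left hharm (le_of_lt hB0)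
    have heq : Real.exp (B * (1 + Real.log w - Real.log s))
        = Real.exp B * (w:ℝ) ^ B / (s:ℝ) ^ B := by
      rw [Real.rpow_def_of_pos hwpos, Real.rpow_def_of_pos hspos, ← Real.exp_add, ← Real.exp_sub]
      congr 1
      ring
    have hsB : (s:ℝ) ≤ (s:ℝ) ^ B := by
      calc (s:ℝ) = (s:ℝ) ^ (1:ℝ) := (Real.rpow_one _).symm
      _ ≤ (s:ℝ) ^ B := Real.rpow_le_rpow_of_exponent_le hs1 hB
    have hsBpos : (0:ℝ) < (s:ℝ) ^ B := Real.rpow_pos_of_pos hspos B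
    have hprodnn : (0:ℝ) ≤ ∏ j ∈ Icc s w, (1 + B / (j : ℝ)) := by
      apply Finset.prod_nonneg
      intro j hj
      rw [Finset.mem_Icc] at hj
      have : (0:ℝ) < j := by exact_mod_cast Nat.lt_of_lt_of_le (by omega) hj.1
      positivity
    calc (1 / (s : ℝ)) * ∏ j ∈ Icc s w, (1 + B / (j : ℝ))
        ≤ (1 / (s:ℝ)) * (Real.exp B * (w:ℝ) ^ B / (s:ℝ) ^ B) := by
          apply mul_le_mul_of_nonneg_left _ (by positivity)
          rw [← heq]; exact le_trans hprod hexp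
      _ ≤ (1 / (s:ℝ)) * (Real.exp B * (w:ℝ) ^ B / (s:ℝ)) := by
          gcongr
      _ = Real.exp B * (w:ℝ) ^ B * (1 / (s:ℝ)^2) := by
          field_simp
  -- step 2: sum bound
  calc ∑ s ∈ Icc 1 w, (1 / (s : ℝ)) * ∏ j ∈ Icc s w, (1 + B / (j : ℝ))
      ≤ ∑ s ∈ Icc 1 w, Real.exp B * (w:ℝ) ^ B * (1 / (s:ℝ)^2) := Finset.sum_le_sum step
    _ = Real.exp B * (w:ℝ) ^ B * ∑ s ∈ Icc 1 w, (1 / (s:ℝ)^2) := by rw [Finset.mul_sum]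
    _ ≤ Real.exp B * (w:ℝ) ^ B * (Real.pi ^ 2 / 6) := by
        apply mul_le_mul_of_nonneg_left _ (by positivity)
        have h := hasSum_zeta_two
        have : ∑ s ∈ Icc 1 w, (1 / (s:ℝ)^2) ≤ ∑ s ∈ Icc 0 w, (1 / (s:ℝ)^2) := by
          apply Finset.sum_le_sum_of_subset_of_nonneg (Finset.Icc_subset_Icc_left (by omega))
          intro i _ _; positivity
        refine le_trans this ?_
        exact sum_le_hasSum (Finset.Icc 0 w) (fun i _ => by positivity) h
    _ = Real.pi ^ 2 / 6 * Real.exp B * (w:ℝ) ^ B := by ring
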